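/- Let A and B be n×n real matrices with A·B = B·A, and let t be a real number such that Id - t·A·B is invertible. Then X(t) = A·(Id - t·A·B)⁻¹ satisfies X'(t) = B·X(t)·X(t). -/

import Mathlib

open Matrix

attribute [local instance] Matrix.linftyOpNormedRing Matrix.linftyOpNormedAlgebra

/-- If `A` and `B` commute and `Id - t • (A*B)` is invertible, then
`X(t) = A * (Id - t • A*B)⁻¹` satisfies `X'(t) = B * X(t) * X(t)`. -/
theorem generalized_euler_ode_left {n : ℕ} (A B : Matrix (Fin n) (Fin n) ℝ)
    (hAB : A * B = B * A) (t : ℝ) (h : IsUnit (1 - t • (A * B))) :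
    HasDerivAt (fun s : ℝ => A * (1 - s • (A * B))⁻¹)
      (B * (A * (1 - t • (A * B))⁻¹) * (A * (1 - t • (A * B))⁻¹)) t := by
  have e : (↑h.unit⁻¹ : Matrix (Fin n) (Fin n) ℝ) = (1 - t • (A * B))⁻¹ := by
    rw [Matrix.nonsing_inv_eq_ringInverse]
    exact (Ring.inverse_unit h.unit).symm.trans (congrArg Ring.inverse h.unit_spec)
  -- derivative of s ↦ 1 - s • (A*B)
  have hf : HasDerivAt (fun s : ℝ => (1 : Matrix (Fin n) (Fin n) ℝ) - s • (A * B))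
      (-(A * B)) t := by
    have h0 := ((hasDerivAt_id t).smul_const (A * B)).const_sub (1 : Matrix (Fin n) (Fin n) ℝ)
    simp only [id, one_smul] at h0
    exact h0
  have hinv : HasDerivAt (fun s : ℝ => Ring.inverse (1 - s • (A * B)))
      ((1 - t • (A * B))⁻¹ * (A * B) * (1 - t • (A * B))⁻¹) t := by
    have hR := hasFDerivAt_ringInverse (𝕜 := ℝ) h.unit
    rw [h.unit_spec] at hR
    have h2 := hR.comp_hasDerivAt t hf
    simp [e, mul_assoc] at h2 ⊢
    exact h2
  have hX : HasDerivAt (fun s : ℝ => A * (1 - s • (A * B))⁻¹)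
      (A * ((1 - t • (A * B))⁻¹ * (A * B) * (1 - t • (A * B))⁻¹)) t := by
    have h3 := hinv.const_mul A
    simp only [← Matrix.nonsing_inv_eq_ringInverse] at h3
    exact h3
  convert hX using 1
  -- algebraic rearrangement using commutation
  set i := (1 - t • (A * B))⁻¹ with hi
  have cAB : Commute A B := hAB
  have cAM : Commute A (A * B) := (Commute.refl A).mul_right cAB
  have cBM : Commute B (A * B) := cAB.symm.mul_right (Commute.refl B)
  have cA1 : Commute A (1 - t • (A * B)) := (Commute.one_right A).sub_right (cAM.smul_right t)
  have cB1 : Commute B (1 - t • (A * B)) := (Commute.one_right B).sub_right (cBM.smul_right t)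
  have cAu : Commute A (h.unit : Matrix (Fin n) (Fin n) ℝ) := by rw [h.unit_spec]; exact cA1
  have cBu : Commute B (h.unit : Matrix (Fin n) (Fin n) ℝ) := by rw [h.unit_spec]; exact cB1
  have cAi : Commute A i := e ▸ cAu.units_inv_right
  have cBi : Commute B i := e ▸ cBu.units_inv_right
  simp only [← mul_assoc]
  -- goal: B * A * i * A * i = A * i * A * B * i
  rw [mul_assoc (B * A) i A, ← cAi.eq]
  rw [mul_assoc A i A, ← cAi.eq]
  simp only [← mul_assoc]
  -- goal: B * A * A * i * i = A * A * i * B * i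
  rw [mul_assoc (A * A) i B, ← cBi.eq]
  simp only [← mul_assoc]
  -- goal: B * A * A * i * i = A * A * B * i * i
  congr 2
  rw [← hAB, mul_assoc, mul_assoc, hAB]
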